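/- Let ρ₁, ρ₂ > 0 with α := ρ₁/ρ₂ > 1, let N be a positive integer, and let {B_i}_{i=1}^{N} and {B'_i}_{i=1}^{N} be sequences of positive real numbers such that B_{i+1}/B_i ≥ ρ₁ and B'_{i+1}/B'_i ≤ ρ₂ for all 1 ≤ i ≤ N−1. Then for any natural number q, the set K = { i ∈ {1,…,N} : B_i/B'_i ≤ α^{−q/2} or B_i/B'_i ≥ α^{q/2} } has cardinality |K| ≥ N − q − 1. -/

import Mathlib

/-- If `B_{i+1}/B_i ≥ ρ₁` and `B'_{i+1}/B'_i ≤ ρ₂` for positive sequences indexed by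
`{1,…,N}` with `α = ρ₁/ρ₂ > 1`, then for any `q ∈ ℕ`, the set of indices `i` at which
`B_i/B'_i ≤ α^{-q/2}` or `B_i/B'_i ≥ α^{q/2}` has cardinality at least `N - q - 1`. -/
theorem ratio_separation_count (ρ₁ ρ₂ : ℝ) (hρ₁ : 0 < ρ₁) (hρ₂ : 0 < ρ₂)
    (hα : 1 < ρ₁ / ρ₂) (N : ℕ) (hN : 0 < N) (B B' : Fin N → ℝ)
    (hB : ∀ i, 0 < B i) (hB' : ∀ i, 0 < B' i)
    (hBgrow : ∀ (i : Fin N) (h : (i : ℕ) + 1 < N), ρ₁ ≤ B ⟨(i : ℕ) + 1, h⟩ / B i)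
    (hB'grow : ∀ (i : Fin N) (h : (i : ℕ) + 1 < N), B' ⟨(i : ℕ) + 1, h⟩ / B' i ≤ ρ₂)
    (q : ℕ) :
    (N : ℤ) - q - 1 ≤
      ({i : Fin N |
          B i / B' i ≤ (ρ₁ / ρ₂) ^ (-((q : ℝ) / 2)) ∨
          (ρ₁ / ρ₂) ^ ((q : ℝ) / 2) ≤ B i / B' i} : Set (Fin N)).ncard := by
  classical
  set α : ℝ := ρ₁ / ρ₂ with hαdef
  have hα0 : (0:ℝ) < α := div_pos hρ₁ hρ₂
  -- growth lemmas
  have hBstep : ∀ (k : ℕ) (i : Fin N) (h : (i:ℕ) + k < N),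
      ρ₁ ^ k * B i ≤ B ⟨(i:ℕ)+k, h⟩ := by
    intro k
    induction k with
    | zero => intro i h; simp
    | succ k ih =>
      intro i h
      have h1 : (i:ℕ) + k < N := by omega
      have h2 := hBgrow ⟨(i:ℕ)+k, h1⟩ (by show (i:ℕ)+k+1 < N; omega)
      have hpos := hB ⟨(i:ℕ)+k, h1⟩
      rw [le_div_iff₀ hpos] at h2
      calc ρ₁ ^ (k+1) * B i = ρ₁ * (ρ₁ ^ k * B i) := by ring
        _ ≤ ρ₁ * B ⟨(i:ℕ)+k, h1⟩ :=
            mul_le_mul_of_nonneg_left (ih i h1) hρ₁.le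
        _ ≤ B ⟨(i:ℕ)+k+1, _⟩ := by
            simpa [mul_comm] using h2
  have hB'step : ∀ (k : ℕ) (i : Fin N) (h : (i:ℕ) + k < N),
      B' ⟨(i:ℕ)+k, h⟩ ≤ ρ₂ ^ k * B' i := by
    intro k
    induction k with
    | zero => intro i h; simp
    | succ k ih =>
      intro i h
      have h1 : (i:ℕ) + k < N := by omega
      have h2 := hB'grow ⟨(i:ℕ)+k, h1⟩ (by show (i:ℕ)+k+1 < N; omega)
      have hpos := hB' ⟨(i:ℕ)+k, h1⟩
      rw [div_le_iff₀ hpos] at h2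
      calc B' ⟨(i:ℕ)+k+1, _⟩ ≤ ρ₂ * B' ⟨(i:ℕ)+k, h1⟩ := by
            simpa [mul_comm] using h2
        _ ≤ ρ₂ * (ρ₂ ^ k * B' i) := mul_le_mul_of_nonneg_left (ih i h1) hρ₂.le
        _ = ρ₂ ^ (k+1) * B' i := by ring
  -- ratio lemma
  have hratio : ∀ (i j : Fin N), i ≤ j →
      α ^ ((j:ℕ) - (i:ℕ)) * (B i / B' i) ≤ B j / B' j := by
    intro i j hij
    set k := (j:ℕ) - (i:ℕ) with hk
    have hjk : (i:ℕ) + k < N := by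
      have := j.isLt; omega
    have hjeq : j = ⟨(i:ℕ)+k, hjk⟩ := by
      apply Fin.ext
      simp only [hk]
      omega
    rw [hjeq]
    have h1 := hBstep k i hjk
    have h2 := hB'step k i hjk
    have hBi := hB i
    have hB'i := hB' i
    have hB'j := hB' ⟨(i:ℕ)+k, hjk⟩
    have key : (ρ₁ ^ k * B i) / (ρ₂ ^ k * B' i) ≤ B ⟨(i:ℕ)+k, hjk⟩ / B' ⟨(i:ℕ)+k, hjk⟩ :=
      div_le_div₀ (hB _).le h1 hB'j h2
    calc α ^ k * (B i / B' i) = (ρ₁ ^ k * B i) / (ρ₂ ^ k * B' i) := by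
          rw [hαdef, div_pow]
          field_simp
      _ ≤ _ := key
  -- distance bound for bad indices
  have hα1 : (1:ℝ) < α := hα
  set P : Fin N → Prop := fun i =>
    B i / B' i ≤ α ^ (-((q : ℝ) / 2)) ∨ α ^ ((q : ℝ) / 2) ≤ B i / B' i with hP
  have hbadpair : ∀ i j : Fin N, i ≤ j → ¬ P i → ¬ P j → (j:ℕ) - (i:ℕ) ≤ q := by
    intro i j hij hi hj
    simp only [hP, not_or, not_le] at hi hj
    obtain ⟨hi1, hi2⟩ := hi
    obtain ⟨hj1, hj2⟩ := hj
    have hr := hratio i j hij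
    set k := (j:ℕ) - (i:ℕ) with hk
    have step1 : α ^ k * α ^ (-((q : ℝ) / 2)) < α ^ ((q : ℝ) / 2) := by
      calc α ^ k * α ^ (-((q : ℝ) / 2)) < α ^ k * (B i / B' i) := by
            apply mul_lt_mul_of_pos_left hi1 (pow_pos hα0 k)
        _ ≤ B j / B' j := hr
        _ < α ^ ((q : ℝ) / 2) := hj2
    have step2 : α ^ ((k:ℝ) + (-((q : ℝ) / 2))) < α ^ ((q : ℝ) / 2) := by
      rw [Real.rpow_add hα0, Real.rpow_natCast]
      exact step1
    have := (Real.rpow_lt_rpow_left_iff hα1).mp step2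
    have hkq : (k:ℝ) < q := by linarith
    exact_mod_cast hkq.le
  -- counting
  have hKf : ({i : Fin N | P i} : Set (Fin N)) = ↑(Finset.univ.filter P) := by
    ext i; simp
  rw [show ({i : Fin N |
          B i / B' i ≤ (ρ₁ / ρ₂) ^ (-((q : ℝ) / 2)) ∨
          (ρ₁ / ρ₂) ^ ((q : ℝ) / 2) ≤ B i / B' i} : Set (Fin N)) = {i : Fin N | P i} from rfl,
    hKf, Set.ncard_coe_finset]
  have hsum := Finset.card_filter_add_card_filter_not (s := Finset.univ) (p := P)
  rw [Finset.card_univ, Fintype.card_fin] at hsum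
  set Kc := Finset.univ.filter (fun i => ¬ P i) with hKc
  have hKcbound : Kc.card ≤ q + 1 := by
    rcases Kc.eq_empty_or_nonempty with he | hne
    · simp [he]
    · set m := Kc.min' hne with hm
      have hmKc : m ∈ Kc := Kc.min'_mem hne
      have hmP : ¬ P m := (Finset.mem_filter.mp hmKc).2
      have hsub : Kc.image Fin.val ⊆ Finset.Icc (m:ℕ) ((m:ℕ) + q) := by
        intro x hx
        simp only [Finset.mem_image] at hx
        obtain ⟨j, hj, rfl⟩ := hx
        have hjP : ¬ P j := (Finset.mem_filter.mp hj).2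
        have hmj : m ≤ j := Kc.min'_le j hj
        have := hbadpair m j hmj hmP hjP
        simp only [Finset.mem_Icc]
        constructor
        · exact hmj
        · omega
      calc Kc.card = (Kc.image Fin.val).card :=
            (Finset.card_image_of_injective _ Fin.val_injective).symm
        _ ≤ (Finset.Icc (m:ℕ) ((m:ℕ) + q)).card := Finset.card_le_card hsub
        _ = q + 1 := by rw [Nat.card_Icc]; omega
  omega
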